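/- The generating polynomials M_n(s) := Σ_{j=0}^{n} (2j)! {n brace j}_1 s^j satisfy, for n ≥ 1, the differential-recurrence relation M_n(s) = s (2 M_{n-1}(s) + (10s+2) M_{n-1}'(s) + s(4s+1) M_{n-1}''(s)), with M_0(s) = 1. -/

import Mathlib

noncomputable def LS : ℕ → ℕ → ℝ
  | 0, 0 => 1
  | 0, _ + 1 => 0
  | _ + 1, 0 => 0
  | n + 1, j + 1 => LS n j + ((j:ℝ) + 1) * ((j:ℝ) + 2) * LS n (j + 1)

noncomputable def M (n : ℕ) : Polynomial ℝ :=
  ∑ j ∈ Finset.range (n + 1),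
    Polynomial.C ((Nat.factorial (2 * j) : ℝ) * LS n j) * Polynomial.X ^ j

lemma LS_zero_of_lt : ∀ n k : ℕ, n < k → LS n k = 0 := by
  intro n
  induction n with
  | zero => intro k hk; match k, hk with | k+1, _ => rfl
  | succ m ih =>
    intro k hk
    match k, hk with
    | j+1, hk =>
      have h1 : m < j := Nat.lt_of_succ_lt_succ hk
      rw [show LS (m+1) (j+1) = LS m j + ((j:ℝ)+1)*((j:ℝ)+2)*LS m (j+1) from rfl,
        ih j h1, ih (j+1) (Nat.lt_succ_of_lt h1)]
      ring

lemma coeff_M (n k : ℕ) :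
    (M n).coeff k = (Nat.factorial (2 * k) : ℝ) * LS n k := by
  rw [M, Polynomial.finset_sum_coeff]
  simp only [Polynomial.coeff_C_mul, Polynomial.coeff_X_pow]
  rw [Finset.sum_eq_single k]
  · simp
  · intro b _ hb; simp [Ne.symm hb]
  · intro hk
    simp only [Finset.mem_range, not_lt] at hk
    rw [LS_zero_of_lt n k (by omega)]
    simp

theorem M_recurrence :
    M 0 = 1 ∧
    ∀ n : ℕ, 1 ≤ n →
      M n = Polynomial.X *
        (Polynomial.C 2 * M (n - 1) +
          (Polynomial.C 10 * Polynomial.X + Polynomial.C 2) *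
            Polynomial.derivative (M (n - 1)) +
          Polynomial.X * (Polynomial.C 4 * Polynomial.X + Polynomial.C 1) *
            Polynomial.derivative (Polynomial.derivative (M (n - 1)))) := by
  constructor
  · simp [M, LS]
  · intro n hn
    obtain ⟨m, rfl⟩ : ∃ m, n = m + 1 := ⟨n - 1, by omega⟩
    simp only [Nat.add_sub_cancel]
    ext k
    have key : ∀ q : Polynomial ℝ, (Polynomial.X * (Polynomial.C 4 * Polynomial.X + Polynomial.C 1) * q) = Polynomial.C 4 * (Polynomial.X^2 * q) + Polynomial.X * q := by
      intro q; simp only [Polynomial.C_1]; ring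
    rw [coeff_M]
    match k with
    | 0 =>
      simp [Polynomial.mul_coeff_zero, show LS (m+1) 0 = 0 from rfl]
    | j + 1 =>
      rw [Polynomial.coeff_X_mul]
      simp only [Polynomial.coeff_add, Polynomial.coeff_C_mul, key, Polynomial.mul_coeff_zero,
        add_mul, Polynomial.coeff_X_mul, mul_assoc]
      have hXp : ∀ q : Polynomial ℝ, (Polynomial.X * q).coeff j = if 1 ≤ j then q.coeff (j - 1) else 0 := by
        intro q
        rw [show Polynomial.X * q = Polynomial.X ^ 1 * q by ring, Polynomial.coeff_X_pow_mul']
      have hX2 : ∀ q : Polynomial ℝ, (Polynomial.X^2 * q).coeff j = if 2 ≤ j then q.coeff (j - 2) else 0 := by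
        intro q; rw [Polynomial.coeff_X_pow_mul']
      rw [hXp, hXp, hX2]
      simp only [Polynomial.coeff_derivative, coeff_M]
      have hrec : LS (m+1) (j+1) = LS m j + ((j:ℝ)+1)*((j:ℝ)+2)*LS m (j+1) := rfl
      rw [hrec]
      match j with
      | 0 =>
        norm_num [Nat.factorial]
        ring
      | 1 =>
        norm_num [Nat.factorial]
        ring
      | i + 2 =>
        simp only [show 1 ≤ i + 2 from by omega, show 2 ≤ i + 2 from by omega, if_true,
          Nat.add_sub_cancel, show i + 2 - 1 = i + 1 from rfl]
        have hf1 : (Nat.factorial (2 * (i + 3)) : ℝ) = (2*(i:ℝ)+6) * ((2*(i:ℝ)+5) * (Nat.factorial (2 * (i+2)) : ℝ)) := by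
          push_cast [show 2 * (i+3) = (2*(i+2)+1) + 1 by ring, Nat.factorial_succ]
          ring
        rw [hf1]
        push_cast
        ring
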